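/- arXiv:2505.09214 — 3 statements merged into one kernel-verified Lean document; each statement's English description precedes it below -/
import Mathlib

section
/- (Proposition 1) Let W^{(1)},…,W^{(L)} and Ŵ^{(1)},…,Ŵ^{(L)} be two sets of weight matrices of the same shapes with ‖Ŵ^{(l)}‖_F ≤ ‖W^{(l)}‖_F for each l, and let the input satisfy ‖φ‖ ≤ 1. Then the output distortion of the full network is bounded by ‖f^{(L)}(φ; W) − f^{(L)}(φ; Ŵ)‖ ≤ Σ_{l=1}^{L} A^{(l)} · ‖W^{(l)} − Ŵ^{(l)}‖_F, where A^{(l)} = ∏_{i=1, i≠l}^{L} ‖W^{(i)}‖_F. -/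
open scoped BigOperators

noncomputable def frobNorm {m n : ℕ} (W : Matrix (Fin m) (Fin n) ℝ) : ℝ :=
  Real.sqrt (∑ i, ∑ j, (W i j) ^ 2)

noncomputable def mulVecE {m n : ℕ} (W : Matrix (Fin m) (Fin n) ℝ)
    (v : EuclideanSpace ℝ (Fin n)) : EuclideanSpace ℝ (Fin m) :=
  (WithLp.equiv 2 _).symm (W.mulVec ((WithLp.equiv 2 _) v))

noncomputable def actE (σ : ℝ → ℝ) {n : ℕ} (v : EuclideanSpace ℝ (Fin n)) :
    EuclideanSpace ℝ (Fin n) :=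
  (WithLp.equiv 2 _).symm (fun i => σ ((WithLp.equiv 2 _) v i))

lemma frobNorm_nonneg {m n : ℕ} (W : Matrix (Fin m) (Fin n) ℝ) : 0 ≤ frobNorm W :=
  Real.sqrt_nonneg _

lemma norm_euclidean {n : ℕ} (v : EuclideanSpace ℝ (Fin n)) :
    ‖v‖ = Real.sqrt (∑ i, (v i) ^ 2) := by
  rw [EuclideanSpace.norm_eq]
  simp [Real.norm_eq_abs, sq_abs]

lemma norm_mulVecE_le {m n : ℕ} (W : Matrix (Fin m) (Fin n) ℝ)
    (v : EuclideanSpace ℝ (Fin n)) : ‖mulVecE W v‖ ≤ frobNorm W * ‖v‖ := by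
  rw [norm_euclidean, norm_euclidean, frobNorm, ← Real.sqrt_mul (by positivity)]
  apply Real.sqrt_le_sqrt
  rw [Finset.sum_mul]
  apply Finset.sum_le_sum
  intro i _
  have : mulVecE W v i = ∑ j, W i j * v j := rfl
  rw [this]
  exact Finset.sum_mul_sq_le_sq_mul_sq _ _ _

lemma mulVecE_sub_mat {m n : ℕ} (W W' : Matrix (Fin m) (Fin n) ℝ)
    (v : EuclideanSpace ℝ (Fin n)) :
    mulVecE W v - mulVecE W' v = mulVecE (W - W') v := by
  ext i
  simp [mulVecE, Matrix.sub_mulVec]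

lemma mulVecE_sub_vec {m n : ℕ} (W : Matrix (Fin m) (Fin n) ℝ)
    (u v : EuclideanSpace ℝ (Fin n)) :
    mulVecE W u - mulVecE W v = mulVecE W (u - v) := by
  ext i
  simp [mulVecE, Matrix.mulVec_sub]

lemma norm_actE_sub_le {σ : ℝ → ℝ} (hσ : LipschitzWith 1 σ) {n : ℕ}
    (u v : EuclideanSpace ℝ (Fin n)) : ‖actE σ u - actE σ v‖ ≤ ‖u - v‖ := by
  rw [norm_euclidean, norm_euclidean]
  apply Real.sqrt_le_sqrt
  apply Finset.sum_le_sum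
  intro i _
  have h1 : (actE σ u - actE σ v) i = σ (u i) - σ (v i) := rfl
  have h2 : (u - v) i = u i - v i := rfl
  rw [h1, h2, ← sq_abs, ← sq_abs (u i - v i)]
  have := hσ.dist_le_mul (u i) (v i)
  rw [Real.dist_eq, Real.dist_eq] at this
  apply pow_le_pow_left₀ (abs_nonneg _)
  simpa using this

lemma norm_actE_le {σ : ℝ → ℝ} (hσ : LipschitzWith 1 σ) (hσ0 : σ 0 = 0) {n : ℕ}
    (v : EuclideanSpace ℝ (Fin n)) : ‖actE σ v‖ ≤ ‖v‖ := by
  have h0 : actE σ (0 : EuclideanSpace ℝ (Fin n)) = 0 := by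
    ext i
    simp [actE]
    exact hσ0
  have := norm_actE_sub_le hσ v (0 : EuclideanSpace ℝ (Fin n))
  rwa [h0, sub_zero, sub_zero] at this

noncomputable def fcnet (σ : ℝ → ℝ) (d : ℕ → ℕ)
    (W : (l : ℕ) → Matrix (Fin (d (l + 1))) (Fin (d l)) ℝ)
    (φ : EuclideanSpace ℝ (Fin (d 0))) : (l : ℕ) → EuclideanSpace ℝ (Fin (d l))
  | 0 => φ
  | 1 => mulVecE (W 0) φ
  | (l + 2) => mulVecE (W (l + 1)) (actE σ (fcnet σ d W φ (l + 1)))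

lemma norm_fcnet_le {σ : ℝ → ℝ} (hσ : LipschitzWith 1 σ) (hσ0 : σ 0 = 0)
    (d : ℕ → ℕ)
    (W : (l : ℕ) → Matrix (Fin (d (l + 1))) (Fin (d l)) ℝ)
    (φ : EuclideanSpace ℝ (Fin (d 0))) (hφ : ‖φ‖ ≤ 1) :
    ∀ l, ‖fcnet σ d W φ l‖ ≤ ∏ i ∈ Finset.range l, frobNorm (W i)
  | 0 => by simpa [fcnet] using hφ
  | 1 => by
      simp only [fcnet, Finset.range_one, Finset.prod_singleton]
      calc ‖mulVecE (W 0) φ‖ ≤ frobNorm (W 0) * ‖φ‖ := norm_mulVecE_le _ _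
        _ ≤ frobNorm (W 0) * 1 := by
            exact mul_le_mul_of_nonneg_left hφ (frobNorm_nonneg _)
        _ = frobNorm (W 0) := mul_one _
  | (l + 2) => by
      have ih := norm_fcnet_le hσ hσ0 d W φ hφ (l + 1)
      show ‖mulVecE (W (l + 1)) (actE σ (fcnet σ d W φ (l + 1)))‖ ≤ _
      rw [Finset.prod_range_succ, mul_comm]
      calc ‖mulVecE (W (l + 1)) (actE σ (fcnet σ d W φ (l + 1)))‖
          ≤ frobNorm (W (l + 1)) * ‖actE σ (fcnet σ d W φ (l + 1))‖ := norm_mulVecE_le _ _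
        _ ≤ frobNorm (W (l + 1)) * ∏ i ∈ Finset.range (l + 1), frobNorm (W i) := by
            apply mul_le_mul_of_nonneg_left _ (frobNorm_nonneg _)
            exact (norm_actE_le hσ hσ0 _).trans ih

lemma fcnet_dist_le {σ : ℝ → ℝ} (hσ : LipschitzWith 1 σ) (hσ0 : σ 0 = 0)
    (d : ℕ → ℕ)
    (W W' : (l : ℕ) → Matrix (Fin (d (l + 1))) (Fin (d l)) ℝ)
    (hprune : ∀ l, frobNorm (W' l) ≤ frobNorm (W l))
    (φ : EuclideanSpace ℝ (Fin (d 0))) (hφ : ‖φ‖ ≤ 1) :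
    ∀ L, ‖fcnet σ d W φ L - fcnet σ d W' φ L‖ ≤
      ∑ l ∈ Finset.range L,
        (∏ i ∈ (Finset.range L).erase l, frobNorm (W i)) * frobNorm (W l - W' l)
  | 0 => by simp [fcnet]
  | 1 => by
      show ‖mulVecE (W 0) φ - mulVecE (W' 0) φ‖ ≤ _
      rw [mulVecE_sub_mat]
      simp only [Finset.range_one, Finset.sum_singleton, Finset.erase_singleton,
        Finset.prod_empty, one_mul]
      calc ‖mulVecE (W 0 - W' 0) φ‖ ≤ frobNorm (W 0 - W' 0) * ‖φ‖ := norm_mulVecE_le _ _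
        _ ≤ frobNorm (W 0 - W' 0) * 1 :=
            mul_le_mul_of_nonneg_left hφ (frobNorm_nonneg _)
        _ = _ := mul_one _
  | (l + 2) => by
      have ih := fcnet_dist_le hσ hσ0 d W W' hprune φ hφ (l + 1)
      set a := actE σ (fcnet σ d W φ (l + 1)) with ha
      set a' := actE σ (fcnet σ d W' φ (l + 1)) with ha'
      have hnota : (l + 1) ∉ Finset.range (l + 1) := by simp
      -- bound on ‖a'‖
      have hA : ‖a'‖ ≤ ∏ i ∈ Finset.range (l + 1), frobNorm (W i) := by
        refine (norm_actE_le hσ hσ0 _).trans ?_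
        refine (norm_fcnet_le hσ hσ0 d W' φ hφ (l + 1)).trans ?_
        exact Finset.prod_le_prod (fun i _ => frobNorm_nonneg _) (fun i _ => hprune i)
      have key : ‖fcnet σ d W φ (l + 2) - fcnet σ d W' φ (l + 2)‖ ≤
          frobNorm (W (l + 1)) * ‖fcnet σ d W φ (l + 1) - fcnet σ d W' φ (l + 1)‖ +
          frobNorm (W (l + 1) - W' (l + 1)) * ‖a'‖ := by
        have hsplit : fcnet σ d W φ (l + 2) - fcnet σ d W' φ (l + 2) =
            mulVecE (W (l + 1)) (a - a') + mulVecE (W (l + 1) - W' (l + 1)) a' := by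
          show mulVecE (W (l + 1)) a - mulVecE (W' (l + 1)) a' = _
          rw [← mulVecE_sub_vec, ← mulVecE_sub_mat]; abel
        rw [hsplit]
        refine (norm_add_le _ _).trans (add_le_add ?_ ?_)
        · exact (norm_mulVecE_le _ _).trans
            (mul_le_mul_of_nonneg_left (norm_actE_sub_le hσ _ _) (frobNorm_nonneg _))
        · exact norm_mulVecE_le _ _
      -- rewrite RHS
      rw [Finset.sum_range_succ]
      have herase : (Finset.range (l + 2)).erase (l + 1) = Finset.range (l + 1) := by
        rw [Finset.range_add_one, Finset.erase_insert hnota]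
      rw [herase]
      have hterm : ∀ k ∈ Finset.range (l + 1),
          (∏ i ∈ (Finset.range (l + 2)).erase k, frobNorm (W i)) * frobNorm (W k - W' k) =
          frobNorm (W (l + 1)) *
            ((∏ i ∈ (Finset.range (l + 1)).erase k, frobNorm (W i)) * frobNorm (W k - W' k)) := by
        intro k hk
        have hkne : k ≠ l + 1 := by
          intro h; simp [h] at hk
        rw [Finset.range_add_one, Finset.erase_insert_of_ne (Ne.symm hkne),
          Finset.prod_insert (fun h => hnota (Finset.mem_of_mem_erase h))]
        ring
      rw [Finset.sum_congr rfl hterm, ← Finset.mul_sum]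
      calc ‖fcnet σ d W φ (l + 2) - fcnet σ d W' φ (l + 2)‖
          ≤ frobNorm (W (l + 1)) * ‖fcnet σ d W φ (l + 1) - fcnet σ d W' φ (l + 1)‖ +
            frobNorm (W (l + 1) - W' (l + 1)) * ‖a'‖ := key
        _ ≤ frobNorm (W (l + 1)) * (∑ k ∈ Finset.range (l + 1),
              (∏ i ∈ (Finset.range (l + 1)).erase k, frobNorm (W i)) * frobNorm (W k - W' k)) +
            frobNorm (W (l + 1) - W' (l + 1)) *
              ∏ i ∈ Finset.range (l + 1), frobNorm (W i) := by
            refine add_le_add (mul_le_mul_of_nonneg_left ih (frobNorm_nonneg _))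
              (mul_le_mul_of_nonneg_left hA (frobNorm_nonneg _))
        _ = _ := by ring

/-- (Proposition 1) For pruned weights `Ŵ` with `‖Ŵ^{(l)}‖_F ≤ ‖W^{(l)}‖_F` for each layer,
and input `‖φ‖ ≤ 1`, the output distortion of the full `L`-layer network is bounded by
`‖f^{(L)}(φ; W) − f^{(L)}(φ; Ŵ)‖ ≤ Σ_{l=1}^{L} A^{(l)} ‖W^{(l)} − Ŵ^{(l)}‖_F`, where
`A^{(l)} = ∏_{i=1, i≠l}^{L} ‖W^{(i)}‖_F` (here `W^{(j)} = W (j-1)`). -/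
theorem fcnet_output_distortion_bound (σ : ℝ → ℝ)
    (hσ : LipschitzWith 1 σ) (hσ0 : σ 0 = 0)
    (d : ℕ → ℕ) (L : ℕ) (hL : 1 ≤ L)
    (W W' : (l : ℕ) → Matrix (Fin (d (l + 1))) (Fin (d l)) ℝ)
    (hprune : ∀ l, frobNorm (W' l) ≤ frobNorm (W l))
    (φ : EuclideanSpace ℝ (Fin (d 0))) (hφ : ‖φ‖ ≤ 1) :
    ‖fcnet σ d W φ L - fcnet σ d W' φ L‖ ≤
      ∑ l ∈ Finset.range L,
        (∏ i ∈ (Finset.range L).erase l, frobNorm (W i)) * frobNorm (W l - W' l) :=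
  fcnet_dist_le hσ hσ0 d W W' hprune φ hφ L
end

section
/- (Lemma 4, general D; Φ(D) = Φ(1) + q log D) Let q ≥ 1 be an integer and D > 0. For every probability density p on ℝ^q (p ≥ 0, ∫ p = 1) with z ↦ ‖z‖ p(z) integrable, ∫_{ℝ^q} ‖z‖ p(z) dz ≤ D, and p log p integrable, the differential entropy satisfies −∫_{ℝ^q} p(z) ln p(z) dz ≤ q ln(√π e D / q) + ln(2 Γ(q) / Γ(q/2)). -/
open MeasureTheory

/-- (Lemma 4, general `D`; `Φ(D) = Φ(1) + q log D`) Let `q ≥ 1` and `D > 0`. Every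
probability density `p` on `ℝ^q` with `∫ ‖z‖ p(z) dz ≤ D` (and the stated integrability)
has differential entropy at most `q ln(√π e D / q) + ln(2 Γ(q) / Γ(q/2))`. -/
theorem differential_entropy_sup_bound (q : ℕ) (hq : 1 ≤ q) (D : ℝ) (hD : 0 < D)
    (p : EuclideanSpace ℝ (Fin q) → ℝ)
    (hp0 : ∀ z, 0 ≤ p z)
    (hp1 : ∫ z, p z = 1)
    (hint : Integrable (fun z : EuclideanSpace ℝ (Fin q) => ‖z‖ * p z))
    (hmean : ∫ z : EuclideanSpace ℝ (Fin q), ‖z‖ * p z ≤ D)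
    (hlog : Integrable (fun z : EuclideanSpace ℝ (Fin q) => p z * Real.log (p z))) :
    -∫ z : EuclideanSpace ℝ (Fin q), p z * Real.log (p z) ≤
      q * Real.log (Real.sqrt Real.pi * Real.exp 1 * D / q) +
        Real.log (2 * Real.Gamma q / Real.Gamma ((q : ℝ) / 2)) := by
  haveI : Nonempty (Fin q) := ⟨⟨0, hq⟩⟩
  have hq0 : (0:ℝ) < q := by exact_mod_cast hq
  have hsπ : (0:ℝ) < Real.sqrt Real.pi := Real.sqrt_pos.2 Real.pi_pos
  have hΓq : 0 < Real.Gamma q := Real.Gamma_pos_of_pos hq0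
  have hΓq2 : 0 < Real.Gamma ((q:ℝ)/2) := Real.Gamma_pos_of_pos (by positivity)
  set β : ℝ := (q:ℝ) / D with hβdef
  have hβ : 0 < β := by positivity
  -- p is integrable since its integral is 1
  have hpint : Integrable p := by
    by_contra h
    rw [integral_undef h] at hp1
    norm_num at hp1
  -- integrability of the reference exponential density
  have hgint : Integrable (fun z : EuclideanSpace ℝ (Fin q) => Real.exp (-(β * ‖z‖))) := by
    set M : ℝ := (1 + ((q:ℝ)+1)/β) ^ (q+1) with hM
    have key : ∀ t : ℝ, 0 ≤ t →
        Real.exp (-(β * t)) ≤ M * (1 + t) ^ (-((q:ℝ)+1)) := by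
      intro t ht
      set s : ℝ := β / ((q:ℝ)+1) with hs
      have hs0 : 0 < s := by positivity
      have h1 : 1 + t ≤ (1 + 1/s) * Real.exp (s * t) := by
        have he1 : (1:ℝ) ≤ Real.exp (s*t) := Real.one_le_exp (by positivity)
        have ht2 : t ≤ Real.exp (s*t) / s := by
          rw [le_div_iff₀ hs0]; nlinarith [Real.add_one_le_exp (s*t)]
        calc 1 + t ≤ Real.exp (s*t) + Real.exp (s*t)/s := by linarith
          _ = (1 + 1/s) * Real.exp (s*t) := by field_simp
      have h2 : (1 + t) ^ (q+1) ≤ M * Real.exp (β * t) := by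
        calc (1 + t) ^ (q+1) ≤ ((1 + 1/s) * Real.exp (s*t)) ^ (q+1) :=
              pow_le_pow_left₀ (by positivity) h1 _
          _ = (1 + 1/s) ^ (q+1) * Real.exp (s*t) ^ (q+1) := mul_pow _ _ _
          _ = M * Real.exp (β * t) := by
              rw [← Real.exp_nat_mul, hM, hs, one_div_div]
              congr 2
              push_cast
              field_simp
      have h3 : (0:ℝ) < 1 + t := by linarith
      have hcast : -((q:ℝ)+1) = -(((q+1 : ℕ)):ℝ) := by push_cast; ring
      rw [hcast, Real.rpow_neg h3.le, Real.rpow_natCast, ← div_eq_mul_inv,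
        le_div_iff₀ (pow_pos h3 _)]
      calc Real.exp (-(β * t)) * (1+t)^(q+1)
          ≤ Real.exp (-(β * t)) * (M * Real.exp (β * t)) :=
            mul_le_mul_of_nonneg_left h2 (Real.exp_nonneg _)
        _ = M := by rw [Real.exp_neg]; field_simp
    have hnr : (Module.finrank ℝ (EuclideanSpace ℝ (Fin q)) : ℝ) < (q:ℝ)+1 := by
      rw [finrank_euclideanSpace_fin]; linarith
    refine ((integrable_one_add_norm hnr).const_mul M).mono'
      ((Continuous.aestronglyMeasurable (by fun_prop))) ?_
    filter_upwards with x
    rw [Real.norm_eq_abs, abs_of_pos (Real.exp_pos _)]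
    exact key ‖x‖ (norm_nonneg x)
  -- the value of the normalizing integral
  set I : ℝ := 2 * Real.Gamma q * Real.sqrt Real.pi ^ q / (Real.Gamma ((q:ℝ)/2) * β ^ q)
    with hIdef
  have hI0 : 0 < I := by positivity
  have hI : ∫ z : EuclideanSpace ℝ (Fin q), Real.exp (-(β * ‖z‖)) = I := by
    haveI : Nontrivial (EuclideanSpace ℝ (Fin q)) := inferInstance
    have hdim : Module.finrank ℝ (EuclideanSpace ℝ (Fin q)) = q := finrank_euclideanSpace_fin
    rw [show (fun z : EuclideanSpace ℝ (Fin q) => Real.exp (-(β * ‖z‖)))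
        = fun z => (fun r : ℝ => Real.exp (-(β * r))) ‖z‖ from rfl,
      MeasureTheory.integral_fun_norm_addHaar volume (fun r : ℝ => Real.exp (-(β * r)))]
    rw [hdim]
    have hsub : ∫ y in Set.Ioi (0:ℝ), y ^ (q - 1) • Real.exp (-(β * y))
        = (1/β) ^ q * Real.Gamma q := by
      rw [setIntegral_congr_fun measurableSet_Ioi
        (fun y (hy : y ∈ Set.Ioi (0:ℝ)) => by
          rw [smul_eq_mul, show (y:ℝ) ^ (q-1) = y ^ ((q:ℝ) - 1) by
            rw [← Real.rpow_natCast y (q-1), Nat.cast_sub hq, Nat.cast_one]])]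
      rw [Real.integral_rpow_mul_exp_neg_mul_Ioi (by exact_mod_cast Nat.pos_of_ne_zero (by omega)) hβ]
      rw [← Real.rpow_natCast (1/β) q]
    rw [hsub]
    rw [measureReal_def, EuclideanSpace.volume_ball, Fintype.card_fin, ENNReal.ofReal_one, one_pow, one_mul,
      ENNReal.toReal_ofReal (by positivity)]
    have hq2 : Real.Gamma ((q:ℝ)/2 + 1) = (q:ℝ)/2 * Real.Gamma ((q:ℝ)/2) :=
      Real.Gamma_add_one (by positivity)
    rw [hq2, nsmul_eq_mul, smul_eq_mul, hIdef]
    have h1 : Real.Gamma ((q:ℝ)/2) ≠ 0 := hΓq2.ne'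
    have hqq : (q:ℝ) ≠ 0 := hq0.ne'
    field_simp
    ring_nf
    rw [← mul_pow, mul_inv_cancel₀ hβ.ne', one_pow]
  -- the normalized reference density g
  set C : ℝ := I⁻¹ with hCdef
  have hC0 : 0 < C := by positivity
  set g : EuclideanSpace ℝ (Fin q) → ℝ := fun z => C * Real.exp (-(β * ‖z‖)) with hgdef
  have hg0 : ∀ z, 0 < g z := fun z => mul_pos hC0 (Real.exp_pos _)
  have hgint' : Integrable g := hgint.const_mul C
  have hgsum : ∫ z, g z = 1 := by
    simp only [hgdef]
    rw [integral_const_mul, hI, hCdef, inv_mul_cancel₀ hI0.ne']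
  -- pointwise Gibbs inequality
  have gibbs : ∀ z, p z * Real.log (g z) + (p z - g z) ≤ p z * Real.log (p z) := by
    intro z
    rcases (hp0 z).eq_or_lt with h | h
    · rw [← h]; simp; linarith [(hg0 z).le]
    · have hgz := hg0 z
      have hlog1 : Real.log (g z / p z) ≤ g z / p z - 1 :=
        Real.log_le_sub_one_of_pos (by positivity)
      rw [Real.log_div hgz.ne' h.ne'] at hlog1
      have h2 : p z * (Real.log (g z) - Real.log (p z)) ≤ g z - p z := by
        calc p z * (Real.log (g z) - Real.log (p z)) ≤ p z * (g z / p z - 1) :=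
              mul_le_mul_of_nonneg_left hlog1 h.le
          _ = g z - p z := by rw [mul_sub, mul_div_cancel₀ _ h.ne', mul_one]
      rw [mul_sub] at h2
      linarith
  -- rewrite p·log g
  have hfun : (fun z : EuclideanSpace ℝ (Fin q) => p z * Real.log (g z) + (p z - g z)) =
      fun z => (Real.log C * p z - β * (‖z‖ * p z)) + (p z - g z) := by
    funext z
    rw [hgdef]
    simp only []
    rw [Real.log_mul hC0.ne' (Real.exp_ne_zero _), Real.log_exp]
    ring
  have hLint : Integrable (fun z : EuclideanSpace ℝ (Fin q) =>
      (Real.log C * p z - β * (‖z‖ * p z)) + (p z - g z)) :=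
    ((hpint.const_mul _).sub (hint.const_mul β)).add (hpint.sub hgint')
  have hmono : ∫ z, ((Real.log C * p z - β * (‖z‖ * p z)) + (p z - g z)) ≤
      ∫ z, p z * Real.log (p z) := by
    refine integral_mono hLint hlog ?_
    intro z
    have h := gibbs z
    have e : Real.log (g z) = Real.log C + -(β * ‖z‖) := by
      rw [hgdef]
      rw [Real.log_mul hC0.ne' (Real.exp_ne_zero _), Real.log_exp]
    have key2 : Real.log C * p z - β * (‖z‖ * p z) + (p z - g z)
        = p z * Real.log (g z) + (p z - g z) := by rw [e]; ring
    show Real.log C * p z - β * (‖z‖ * p z) + (p z - g z) ≤ p z * Real.log (p z)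
    rw [key2]
    exact h
  have A1 : Integrable (fun z : EuclideanSpace ℝ (Fin q) => Real.log C * p z) :=
    hpint.const_mul _
  have A2 : Integrable (fun z : EuclideanSpace ℝ (Fin q) => β * (‖z‖ * p z)) :=
    hint.const_mul β
  have A : Integrable (fun z : EuclideanSpace ℝ (Fin q) =>
      Real.log C * p z - β * (‖z‖ * p z)) := A1.sub A2
  have B : Integrable (fun z : EuclideanSpace ℝ (Fin q) => p z - g z) := hpint.sub hgint'
  have hLval : ∫ z, ((Real.log C * p z - β * (‖z‖ * p z)) + (p z - g z)) =
      Real.log C - β * (∫ z, ‖z‖ * p z) := by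
    rw [integral_add A B, integral_sub A1 A2, integral_sub hpint hgint',
      integral_const_mul, integral_const_mul, hp1, hgsum]
    ring
  rw [hLval] at hmono
  have hβD : β * D = q := by rw [hβdef]; field_simp
  have step : -∫ z, p z * Real.log (p z) ≤ (q:ℝ) + Real.log I := by
    have h1 : -∫ z, p z * Real.log (p z) ≤ β * (∫ z, ‖z‖ * p z) - Real.log C := by linarith
    have h2 : β * (∫ z, ‖z‖ * p z) ≤ β * D := mul_le_mul_of_nonneg_left hmean hβ.le
    rw [hCdef, Real.log_inv] at h1
    linarith
  refine step.trans (le_of_eq ?_)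
  rw [hIdef, hβdef,
    Real.log_div (by positivity) (by positivity),
    Real.log_mul (by positivity) (by positivity),
    Real.log_mul two_ne_zero hΓq.ne',
    Real.log_mul hΓq2.ne' (by positivity),
    Real.log_pow, Real.log_pow,
    Real.log_div hq0.ne' hD.ne',
    Real.log_div (by positivity) hq0.ne',
    Real.log_mul (by positivity) hD.ne',
    Real.log_mul hsπ.ne' (Real.exp_ne_zero 1),
    Real.log_exp,
    Real.log_div (by positivity) hΓq2.ne',
    Real.log_mul two_ne_zero hΓq.ne']
  ring
end

section
/- (Achievability of the entropy supremum) Let q ≥ 1 be an integer and D > 0, and define the density Q(z) = e^{−(q/D)‖z‖} / B(q/D) on ℝ^q, where B(β) = 2 Γ(q) π^{q/2}/(Γ(q/2) β^q). Then Q is a probability density (∫ Q = 1), its expected norm is ∫_{ℝ^q} ‖z‖ Q(z) dz = D, and its differential entropy equals the supremum value: −∫_{ℝ^q} Q(z) ln Q(z) dz = q ln(√π e D / q) + ln(2 Γ(q) / Γ(q/2)). -/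
open MeasureTheory Real Set

lemma radial_int (q : ℕ) (hq : 1 ≤ q) (f : ℝ → ℝ) :
    ∫ z : EuclideanSpace ℝ (Fin q), f ‖z‖ =
      (q : ℝ) * (Real.sqrt π ^ q / Real.Gamma (q / 2 + 1)) *
        ∫ y in Ioi (0 : ℝ), y ^ (q - 1) * f y := by
  haveI : Nonempty (Fin q) := ⟨⟨0, hq⟩⟩
  haveI : Nontrivial (EuclideanSpace ℝ (Fin q)) :=
    Module.nontrivial_of_finrank_pos (R := ℝ) (by rw [finrank_euclideanSpace_fin]; omega)
  have hdim : Module.finrank ℝ (EuclideanSpace ℝ (Fin q)) = q := finrank_euclideanSpace_fin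
  rw [show (∫ z : EuclideanSpace ℝ (Fin q), f ‖z‖) = _ from
    MeasureTheory.integral_fun_norm_addHaar volume f, hdim]
  rw [measureReal_def, EuclideanSpace.volume_ball (Fin q) 0 1]
  simp only [ENNReal.ofReal_one, one_pow, one_mul, Fintype.card_fin]
  rw [ENNReal.toReal_ofReal (by positivity)]
  simp [nsmul_eq_mul, smul_eq_mul, mul_assoc]

lemma intOn_pow_exp (m : ℕ) {β : ℝ} (hβ : 0 < β) :
    IntegrableOn (fun y : ℝ => y ^ m * Real.exp (-β * y)) (Ioi 0) := by
  have h := integrableOn_rpow_mul_exp_neg_mul_rpow (s := (m : ℝ)) (p := 1)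
    (lt_of_lt_of_le neg_one_lt_zero (Nat.cast_nonneg m)) one_pos hβ
  refine h.congr_fun (fun x hx => ?_) measurableSet_Ioi
  simp only [Real.rpow_natCast, Real.rpow_one]

lemma oneD (m : ℕ) {β : ℝ} (hβ : 0 < β) :
    ∫ y in Ioi (0 : ℝ), y ^ m * Real.exp (-β * y) =
      Real.Gamma (m + 1) / β ^ (m + 1) := by
  have h := integral_rpow_mul_exp_neg_mul_rpow (p := 1) (q := (m : ℝ)) (b := β)
    one_pos (lt_of_lt_of_le neg_one_lt_zero (Nat.cast_nonneg m)) hβ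
  rw [show (∫ y in Ioi (0:ℝ), y ^ m * Real.exp (-β * y)) =
      ∫ x in Ioi (0:ℝ), x ^ (m : ℝ) * Real.exp (-β * x ^ (1:ℝ)) from
    setIntegral_congr_fun measurableSet_Ioi (fun x hx => by
      rw [Real.rpow_natCast, Real.rpow_one]), h]
  rw [show (-((m:ℝ)+1)/1) = -(((m+1:ℕ)):ℝ) by push_cast; ring,
    Real.rpow_neg hβ.le, Real.rpow_natCast,
    show (((m:ℝ)+1)/1) = ((m:ℝ)+1) by ring]
  ring

open MeasureTheory

/-- (Achievability of the entropy supremum) For `q ≥ 1` and `D > 0`, the density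
`Q(z) = e^{−(q/D)‖z‖} / B(q/D)` on `ℝ^q`, where `B(β) = 2 Γ(q) π^{q/2}/(Γ(q/2) β^q)`,
integrates to `1`, has expected norm `∫ ‖z‖ Q(z) dz = D`, and its differential entropy
equals the supremum value `q ln(√π e D / q) + ln(2 Γ(q) / Γ(q/2))`. -/
theorem entropy_sup_achieved (q : ℕ) (hq : 1 ≤ q) (D : ℝ) (hD : 0 < D) :
    (∫ z : EuclideanSpace ℝ (Fin q),
        Real.exp (-((q : ℝ) / D) * ‖z‖) /
          (2 * Real.Gamma q * Real.pi ^ ((q : ℝ) / 2) /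
            (Real.Gamma ((q : ℝ) / 2) * ((q : ℝ) / D) ^ q)) = 1) ∧
    (∫ z : EuclideanSpace ℝ (Fin q),
        ‖z‖ * (Real.exp (-((q : ℝ) / D) * ‖z‖) /
          (2 * Real.Gamma q * Real.pi ^ ((q : ℝ) / 2) /
            (Real.Gamma ((q : ℝ) / 2) * ((q : ℝ) / D) ^ q))) = D) ∧
    (-∫ z : EuclideanSpace ℝ (Fin q),
        (Real.exp (-((q : ℝ) / D) * ‖z‖) /
          (2 * Real.Gamma q * Real.pi ^ ((q : ℝ) / 2) /
            (Real.Gamma ((q : ℝ) / 2) * ((q : ℝ) / D) ^ q))) *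
        Real.log (Real.exp (-((q : ℝ) / D) * ‖z‖) /
          (2 * Real.Gamma q * Real.pi ^ ((q : ℝ) / 2) /
            (Real.Gamma ((q : ℝ) / 2) * ((q : ℝ) / D) ^ q))) =
      q * Real.log (Real.sqrt Real.pi * Real.exp 1 * D / q) +
        Real.log (2 * Real.Gamma q / Real.Gamma ((q : ℝ) / 2))) := by
  obtain ⟨n, rfl⟩ : ∃ n, q = n + 1 := ⟨q - 1, (Nat.succ_pred_eq_of_pos hq).symm⟩
  set q : ℕ := n + 1 with hqdef
  set β : ℝ := (q : ℝ) / D with hβdef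
  set B : ℝ := 2 * Real.Gamma q * Real.pi ^ ((q : ℝ) / 2) /
      (Real.Gamma ((q : ℝ) / 2) * β ^ q) with hBdef
  set V : ℝ := Real.sqrt π ^ q / Real.Gamma ((q : ℝ) / 2 + 1) with hVdef
  clear_value V B β q
  have hq1 : q - 1 = n := by omega
  have hq0 : (0 : ℝ) < q := by rw [hqdef]; positivity
  have hβ : 0 < β := by rw [hβdef]; exact div_pos hq0 hD
  have hΓq : 0 < Real.Gamma q := Real.Gamma_pos_of_pos hq0
  have hΓq2 : 0 < Real.Gamma ((q : ℝ) / 2) := Real.Gamma_pos_of_pos (by positivity)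
  have hB : 0 < B := by rw [hBdef]; positivity
  have hΓs : Real.Gamma ((q : ℝ) / 2 + 1) = (q : ℝ) / 2 * Real.Gamma ((q : ℝ) / 2) :=
    Real.Gamma_add_one (by positivity)
  have hV : 0 < V := by
    rw [hVdef]; apply div_pos (by positivity) (by rw [hΓs]; positivity)
  have hsq : Real.sqrt π ^ q = π ^ ((q : ℝ) / 2) := by
    rw [Real.sqrt_eq_rpow, ← Real.rpow_natCast (π ^ ((1:ℝ)/2)) q, ← Real.rpow_mul pi_pos.le]
    congr 1; ring
  have hβD : β * D = (q : ℝ) := by rw [hβdef]; field_simp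
  -- moment identities
  have hI0 : (q : ℝ) * V * (Real.Gamma q / β ^ q) = B := by
    rw [hVdef, hBdef, hΓs, hsq]
    field_simp
  have hI1 : (q : ℝ) * V * (Real.Gamma ((q : ℝ) + 1) / β ^ (q + 1)) = B * D := by
    rw [Real.Gamma_add_one hq0.ne', pow_succ, ← hI0, ← hβD]
    field_simp
  have hc0 : ((n : ℝ) + 1) = (q : ℝ) := by rw [hqdef]; push_cast; ring
  have hp0 : β ^ (n + 1) = β ^ q := by rw [hqdef]
  have hc1 : (((n + 1 : ℕ)) : ℝ) + 1 = (q : ℝ) + 1 := by rw [hqdef]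
  have hp1 : β ^ (n + 1 + 1) = β ^ (q + 1) := by rw [hqdef]
  -- radial reductions
  have h0 : (∫ z : EuclideanSpace ℝ (Fin q), Real.exp (-β * ‖z‖)) = B := by
    have h := radial_int q hq (fun r => Real.exp (-β * r))
    rw [h, ← hVdef, hq1, oneD n hβ, hc0, hp0]
    exact hI0
  have h1 : (∫ z : EuclideanSpace ℝ (Fin q), ‖z‖ * Real.exp (-β * ‖z‖)) = B * D := by
    have h := radial_int q hq (fun r => r * Real.exp (-β * r))
    rw [h, ← hVdef, hq1]
    rw [setIntegral_congr_fun measurableSet_Ioi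
      (g := fun y : ℝ => y ^ (n + 1) * Real.exp (-β * y)) (fun y _ => by ring)]
    rw [oneD (n + 1) hβ, hc1, hp1]
    exact hI1
  refine ⟨?_, ?_, ?_⟩
  · rw [integral_div, h0, div_self hB.ne']
  · simp_rw [mul_div_assoc']
    rw [integral_div, h1, mul_comm B D, mul_div_assoc, div_self hB.ne', mul_one]
  · have hent : (∫ z : EuclideanSpace ℝ (Fin q),
        Real.exp (-β * ‖z‖) / B * Real.log (Real.exp (-β * ‖z‖) / B)) =
        -(β * D) - Real.log B := by
      have h := radial_int q hq (fun r => Real.exp (-β * r) / B * Real.log (Real.exp (-β * r) / B))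
      rw [h, ← hVdef, hq1]
      rw [setIntegral_congr_fun measurableSet_Ioi
        (g := fun y : ℝ => (-(β / B)) * (y ^ (n + 1) * Real.exp (-β * y)) +
          (-(Real.log B / B)) * (y ^ n * Real.exp (-β * y)))
        (fun y _ => by
          rw [Real.log_div (Real.exp_ne_zero _) hB.ne', Real.log_exp]
          ring)]
      rw [integral_add ((intOn_pow_exp (n + 1) hβ).const_mul _) ((intOn_pow_exp n hβ).const_mul _),
        integral_const_mul, integral_const_mul, oneD (n + 1) hβ, oneD n hβ, hc1, hp1, hc0, hp0]
      have e2 : Real.Gamma ((q : ℝ) + 1) / β ^ (q + 1) = B * D / ((q : ℝ) * V) := by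
        rw [← hI1]; field_simp
      have e1 : Real.Gamma ((q : ℝ)) / β ^ q = B / ((q : ℝ) * V) := by
        rw [← hI0]; field_simp
      rw [e2, e1]
      field_simp
      ring
    rw [hent]
    rw [show -(-(β * D) - Real.log B) = β * D + Real.log B by ring, hβD]
    -- expand logs
    rw [hBdef, hβdef]
    rw [Real.log_div (by positivity) (by positivity),
      Real.log_mul (by positivity) (by positivity),
      Real.log_mul two_ne_zero hΓq.ne',
      Real.log_mul hΓq2.ne' (by positivity),
      Real.log_rpow pi_pos, Real.log_pow,
      Real.log_div hq0.ne' hD.ne',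
      Real.log_div (by positivity) hq0.ne',
      Real.log_mul (by positivity) (by positivity),
      Real.log_mul (by positivity) (Real.exp_ne_zero 1),
      Real.log_sqrt pi_pos.le, Real.log_exp,
      Real.log_div (by positivity) hΓq2.ne',
      Real.log_mul two_ne_zero hΓq.ne']
    ring
end
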